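/- Let K be a set of desirable option sets containing the empty set in its complement and satisfying axioms K1–K4. Then the set RN(K) := {A ∈ Q : ∃B ∈ K with B \ V_{≤0} ⊆ A ⊆ B} also satisfies K1–K4, does not contain the empty set, and in addition satisfies K0 (A ∈ RN(K) implies A \ {0} ∈ RN(K)). -/

import Mathlib

/-- Axiom K0: removal of the zero option. -/
def AxK0 {V : Type*} [AddCommGroup V] [Module ℝ V] (K : Set (Set V)) : Prop :=
  ∀ A ∈ K, A \ {0} ∈ K

/-- Axiom K1: the singleton of zero is not a desirable option set. -/
def AxK1 {V : Type*} [AddCommGroup V] [Module ℝ V] (K : Set (Set V)) : Prop :=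
  ({0} : Set V) ∉ K

/-- Axiom K2: singletons of (background-)positive options are desirable option sets. -/
def AxK2 {V : Type*} [AddCommGroup V] [Module ℝ V] (Vpos : Set V) (K : Set (Set V)) : Prop :=
  ∀ u ∈ Vpos, ({u} : Set V) ∈ K

/-- Axiom K3: closure under elementwise positive combinations of two members. -/
def AxK3 {V : Type*} [AddCommGroup V] [Module ℝ V] (K : Set (Set V)) : Prop :=
  ∀ A1 ∈ K, ∀ A2 ∈ K, ∀ l m : V → V → ℝ,
    (∀ u ∈ A1, ∀ v ∈ A2, 0 ≤ l u v ∧ 0 ≤ m u v ∧ 0 < l u v + m u v) →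
    {w : V | ∃ u ∈ A1, ∃ v ∈ A2, w = l u v • u + m u v • v} ∈ K

/-- Axiom K4: upward closure under inclusion (within finite option sets). -/
def AxK4 {V : Type*} [AddCommGroup V] [Module ℝ V] (K : Set (Set V)) : Prop :=
  ∀ A1 ∈ K, ∀ A2 : Set V, A2.Finite → A1 ⊆ A2 → A2 ∈ K

/-- Coherence of a set of desirable option sets (a subset of the finite option sets). -/
def CoherentK {V : Type*} [AddCommGroup V] [Module ℝ V] (Vpos : Set V)
    (K : Set (Set V)) : Prop :=
  (∀ A ∈ K, A.Finite) ∧ AxK0 K ∧ AxK1 K ∧ AxK2 Vpos K ∧ AxK3 K ∧ AxK4 K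

/-- Coherence of a set of desirable options. -/
def CoherentD {V : Type*} [AddCommGroup V] [Module ℝ V] (Vpos D : Set V) : Prop :=
  (0 : V) ∉ D ∧ Vpos ⊆ D ∧
  ∀ u ∈ D, ∀ v ∈ D, ∀ l m : ℝ, 0 ≤ l → 0 ≤ m → 0 < l + m → l • u + m • v ∈ D

/-- `K_D`: the binary set of desirable option sets generated by `D`. -/
def KD {V : Type*} [AddCommGroup V] [Module ℝ V] (D : Set V) : Set (Set V) :=
  {A | A.Finite ∧ (A ∩ D).Nonempty}

/-- `D_K`: the set of options whose singletons belong to `K`. -/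
def DK {V : Type*} [AddCommGroup V] [Module ℝ V] (K : Set (Set V)) : Set V :=
  {u | ({u} : Set V) ∈ K}

/-- A set of desirable option sets is binary if it is determined by singleton assessments. -/
def BinaryK {V : Type*} [AddCommGroup V] [Module ℝ V] (K : Set (Set V)) : Prop :=
  ∀ A : Set V, A.Finite → (A ∈ K ↔ ∃ u ∈ A, ({u} : Set V) ∈ K)

/-- `posi S`: all finite positive linear combinations of elements of `S`. -/
def Posi {V : Type*} [AddCommGroup V] [Module ℝ V] (S : Set V) : Set V :=
  {w | ∃ n : ℕ, 0 < n ∧ ∃ (l : Fin n → ℝ) (u : Fin n → V),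
    (∀ k, 0 < l k) ∧ (∀ k, u k ∈ S) ∧ w = ∑ k, l k • u k}

/-- Total set of desirable options. -/
def TotalD {V : Type*} [AddCommGroup V] [Module ℝ V] (Vpos D : Set V) : Prop :=
  CoherentD Vpos D ∧ ∀ u : V, u ≠ 0 → u ∈ D ∨ -u ∈ D

/-- Total set of desirable option sets. -/
def TotalK {V : Type*} [AddCommGroup V] [Module ℝ V] (Vpos : Set V)
    (K : Set (Set V)) : Prop :=
  CoherentK Vpos K ∧ ∀ u : V, u ≠ 0 → ({u, -u} : Set V) ∈ K

/-- Mixing set of desirable options. -/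
def MixingD {V : Type*} [AddCommGroup V] [Module ℝ V] (Vpos D : Set V) : Prop :=
  CoherentD Vpos D ∧ ∀ A : Set V, A.Finite → (Posi A ∩ D).Nonempty → (A ∩ D).Nonempty

/-- Mixing set of desirable option sets. -/
def MixingK {V : Type*} [AddCommGroup V] [Module ℝ V] (Vpos : Set V)
    (K : Set (Set V)) : Prop :=
  CoherentK Vpos K ∧
    ∀ A B : Set V, A.Finite → B ∈ K → A ⊆ B → B ⊆ Posi A → A ∈ K

/-- `V_{≤0}`: the non-positive options (zero together with the strictly negative options). -/
def Vneg {V : Type*} [AddCommGroup V] [Module ℝ V] (Vpos : Set V) : Set V :=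
  {u | u = 0 ∨ -u ∈ Vpos}

/-- The operator `RN`, adding smaller option sets by removing non-positive options. -/
def RN {V : Type*} [AddCommGroup V] [Module ℝ V] (Vpos : Set V)
    (K : Set (Set V)) : Set (Set V) :=
  {A | A.Finite ∧ ∃ B ∈ K, B \ Vneg Vpos ⊆ A ∧ A ⊆ B}

lemma aux_no_neg_subset {V : Type*} [AddCommGroup V] [Module ℝ V]
    (Vpos : Set V) (K : Set (Set V)) (hQ : ∀ A ∈ K, A.Finite)
    (hemp : (∅ : Set V) ∉ K) (h1 : AxK1 K) (h2 : AxK2 Vpos K) (h3 : AxK3 K) :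
    ∀ B ∈ K, ¬ B ⊆ Vneg Vpos := by
  have key : ∀ n : ℕ, ∀ B ∈ K, (B \ {0}).ncard ≤ n → ¬ B ⊆ Vneg Vpos := by
    intro n
    induction n with
    | zero =>
      intro B hB hcard hsub
      have hfin : B.Finite := hQ B hB
      have h0 : B \ {0} = ∅ := by
        rw [← Set.ncard_eq_zero (hfin.diff (t := {0}))]
        omega
      have hB0 : B ⊆ {0} := by
        intro x hx
        by_contra hx0
        exact (Set.eq_empty_iff_forall_notMem.mp h0 x) ⟨hx, hx0⟩
      rcases Set.subset_singleton_iff_eq.mp hB0 with h | h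
      · exact hemp (h ▸ hB)
      · exact h1 (h ▸ hB)
    | succ n ih =>
      intro B hB hcard hsub
      by_cases hsmall : (B \ {0}).ncard ≤ n
      · exact ih B hB hsmall hsub
      have hfin : B.Finite := hQ B hB
      have hne : (B \ {0}).Nonempty := by
        rw [Set.nonempty_iff_ne_empty]
        intro h
        rw [h, Set.ncard_empty] at hsmall
        omega
      obtain ⟨u₀, hu₀B, hu₀0⟩ := hne
      have hu0 : u₀ ≠ 0 := hu₀0
      have hneg : -u₀ ∈ Vpos := (hsub hu₀B).resolve_left hu0
      have hsing : ({-u₀} : Set V) ∈ K := h2 _ hneg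
      classical
      have hW := h3 B hB {-u₀} hsing (fun _ _ => 1)
        (fun u _ => if u = u₀ then 1 else 0) (by
          intro u hu v hv
          by_cases h : u = u₀ <;> simp [h])
      have hWeq : {w : V | ∃ u ∈ B, ∃ v ∈ ({-u₀} : Set V),
          w = (fun _ _ => (1:ℝ)) u v • u +
            (fun u _ => if u = u₀ then (1:ℝ) else 0) u v • v}
          = insert 0 (B \ {u₀}) := by
        ext w
        simp only [Set.mem_setOf_eq, Set.mem_singleton_iff, Set.mem_insert_iff,
          Set.mem_diff]
        constructor
        · rintro ⟨u, hu, v, rfl, rfl⟩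
          by_cases h : u = u₀
          · subst h; left; simp
          · right; simp only [if_neg h, one_smul, zero_smul, add_zero]
            exact ⟨hu, h⟩
        · rintro (rfl | ⟨hu, hne⟩)
          · exact ⟨u₀, hu₀B, -u₀, rfl, by simp⟩
          · exact ⟨w, hu, -u₀, rfl, by simp [hne]⟩
      rw [hWeq] at hW
      have hWsub : insert 0 (B \ {u₀}) ⊆ Vneg Vpos := by
        rintro x (rfl | ⟨hx, _⟩)
        · exact Or.inl rfl
        · exact hsub hx
      have hWcard : ((insert 0 (B \ {u₀})) \ {0}).ncard ≤ n := by
        have heq : (insert 0 (B \ {u₀})) \ {0} = (B \ {0}) \ {u₀} := by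
          ext x
          simp only [Set.mem_diff, Set.mem_insert_iff, Set.mem_singleton_iff]
          tauto
        rw [heq]
        have hmem : u₀ ∈ B \ ({0} : Set V) := ⟨hu₀B, hu₀0⟩
        have := Set.ncard_diff_singleton_lt_of_mem hmem hfin.diff
        omega
      exact ih _ hW hWcard hWsub
  intro B hB
  exact key (B \ {0}).ncard B hB le_rfl

theorem stmt19 {V : Type*} [AddCommGroup V] [Module ℝ V]
    (Vpos : Set V) (K : Set (Set V)) (hQ : ∀ A ∈ K, A.Finite)
    (hemp : (∅ : Set V) ∉ K)
    (h1 : AxK1 K) (h2 : AxK2 Vpos K) (h3 : AxK3 K) (h4 : AxK4 K) :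
    AxK1 (RN Vpos K) ∧ AxK2 Vpos (RN Vpos K) ∧ AxK3 (RN Vpos K) ∧
      AxK4 (RN Vpos K) ∧ (∅ : Set V) ∉ RN Vpos K ∧ AxK0 (RN Vpos K) := by
  classical
  have hkey := aux_no_neg_subset Vpos K hQ hemp h1 h2 h3
  refine ⟨?_, ?_, ?_, ?_, ?_, ?_⟩
  · -- K1
    rintro ⟨-, B, hB, hBs, -⟩
    refine hkey B hB (fun x hx => ?_)
    by_contra hxn
    have : x ∈ ({0} : Set V) := hBs ⟨hx, hxn⟩
    rw [Set.mem_singleton_iff] at this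
    exact hxn (this ▸ Or.inl rfl)
  · -- K2
    intro u hu
    exact ⟨Set.finite_singleton u, {u}, h2 u hu, Set.diff_subset, subset_rfl⟩
  · -- K3
    rintro A1 ⟨hA1f, B1, hB1, hB1s, hA1s⟩ A2 ⟨hA2f, B2, hB2, hB2s, hA2s⟩ l m hlm
    set l' : V → V → ℝ := fun u v =>
      if u ∈ A1 ∧ v ∈ A2 then l u v else if u ∈ A1 then 0 else 1 with hl'
    set m' : V → V → ℝ := fun u v =>
      if u ∈ A1 ∧ v ∈ A2 then m u v else if u ∈ A1 then 1 else 0 with hm'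
    have hcond : ∀ u ∈ B1, ∀ v ∈ B2, 0 ≤ l' u v ∧ 0 ≤ m' u v ∧ 0 < l' u v + m' u v := by
      intro u hu v hv
      by_cases h : u ∈ A1 ∧ v ∈ A2
      · simp only [hl', hm', if_pos h]
        exact hlm u h.1 v h.2
      · by_cases h' : u ∈ A1
        · have hv2 : v ∉ A2 := fun hv2 => h ⟨h', hv2⟩
          simp [hl', hm', h, h', hv2]
        · simp [hl', hm', h, h']
    have hW' := h3 B1 hB1 B2 hB2 l' m' hcond
    have hWsub : {w : V | ∃ u ∈ A1, ∃ v ∈ A2, w = l u v • u + m u v • v} ⊆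
        {w : V | ∃ u ∈ B1, ∃ v ∈ B2, w = l' u v • u + m' u v • v} := by
      rintro w ⟨u, hu, v, hv, rfl⟩
      refine ⟨u, hA1s hu, v, hA2s hv, ?_⟩
      simp [hl', hm', hu, hv]
    refine ⟨(hQ _ hW').subset hWsub, _, hW', ?_, hWsub⟩
    rintro w ⟨⟨u, hu, v, hv, rfl⟩, hwn⟩
    by_cases h : u ∈ A1 ∧ v ∈ A2
    · exact ⟨u, h.1, v, h.2, by simp [hl', hm', h]⟩
    · exfalso
      by_cases h' : u ∈ A1
      · have hv2 : v ∉ A2 := fun hv2 => h ⟨h', hv2⟩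
        have hvneg : v ∈ Vneg Vpos := by
          by_contra hc
          exact hv2 (hB2s ⟨hv, hc⟩)
        have heq : l' u v • u + m' u v • v = v := by
          simp [hl', hm', h, h', hv2]
        rw [heq] at hwn
        exact hwn hvneg
      · have huneg : u ∈ Vneg Vpos := by
          by_contra hc
          exact h' (hB1s ⟨hu, hc⟩)
        have heq : l' u v • u + m' u v • v = u := by
          simp [hl', hm', h, h']
        rw [heq] at hwn
        exact hwn huneg
  · -- K4
    rintro A1 ⟨hA1f, B, hB, hBs, hA1s⟩ A2 hA2f hsub
    refine ⟨hA2f, B ∪ A2, h4 B hB (B ∪ A2) ((hQ B hB).union hA2f) Set.subset_union_left, ?_,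
      Set.subset_union_right⟩
    rintro x ⟨hx, hxn⟩
    rcases hx with hx | hx
    · exact hsub (hBs ⟨hx, hxn⟩)
    · exact hx
  · -- ∅ ∉ RN
    rintro ⟨-, B, hB, hBs, -⟩
    refine hkey B hB (fun x hx => ?_)
    by_contra hxn
    exact (hBs ⟨hx, hxn⟩)
  · -- K0
    rintro A ⟨hAf, B, hB, hBs, hAs⟩
    refine ⟨hAf.diff, B, hB, ?_, fun x hx => hAs hx.1⟩
    intro x hx
    exact ⟨hBs hx, fun h0 => hx.2 (Or.inl h0)⟩
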